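/- Let 1 < p < 2, c > 0 and d ≥ c, and let γ_p = (c²/(2d)) · { p [ 2(d/c)² + 1/p − 1/2 ] }^{1/p}. Then for every λ ∈ ℝ, min{ c²λ²/2, d|λ| } ≤ φ_p(γ_p λ). -/

import Mathlib

open MeasureTheory Real Filter

noncomputable def phi (p x : ℝ) : ℝ :=
  if |x| ≤ 1 then x ^ 2 / 2 else |x| ^ p / p - 1 / p + 1 / 2

noncomputable def gam (r c d : ℝ) : ℝ :=
  c ^ 2 / (2 * d) * (r * (2 * (d / c) ^ 2 + 1 / r - 1 / 2)) ^ (1 / r)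

lemma two_rpow_le_two_mul {p : ℝ} (h1 : 1 ≤ p) (h2 : p ≤ 2) : (2:ℝ) ^ p ≤ 2 * p := by
  have hb : ((1:ℝ) + 1) ^ (p - 1) ≤ 1 + (p - 1) * 1 :=
    rpow_one_add_le_one_add_mul_self (by norm_num) (by linarith) (by linarith)
  have h2p : (2:ℝ) ^ p = 2 ^ (1:ℝ) * 2 ^ (p - 1) := by
    rw [← Real.rpow_add (by norm_num)]; ring_nf
  rw [h2p, Real.rpow_one]
  norm_num at hb
  nlinarith

lemma sq_rpow_half {p : ℝ} (x : ℝ) (hx : 0 ≤ x) : (x ^ 2) ^ (p / 2) = x ^ p := by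
  rw [← Real.rpow_natCast x 2, ← Real.rpow_mul hx]
  norm_num
  congr 1
  ring

set_option maxHeartbeats 1000000

theorem stmt_11 (p c d : ℝ) (hp1 : 1 < p) (hp2 : p < 2) (hc : 0 < c) (hd : c ≤ d) (l : ℝ) :
    min (c ^ 2 * l ^ 2 / 2) (d * |l|) ≤ phi p (gam p c d * l) := by
  have hp0 : 0 < p := by linarith
  have hd0 : 0 < d := lt_of_lt_of_le hc hd
  set u := |l| with hu
  have hu0 : 0 ≤ u := abs_nonneg l
  have hl2 : l ^ 2 = u ^ 2 := (sq_abs l).symm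
  set E : ℝ := 2 * (d / c) ^ 2 + 1 / p - 1 / 2 with hE
  have ht : 1 ≤ d / c := (one_le_div hc).mpr hd
  have hq : (1:ℝ) / 2 < 1 / p := by
    rw [div_lt_div_iff₀ (by norm_num) hp0]; linarith
  set K : ℝ := p * E with hK
  have hpinv : p * (1 / p) = 1 := mul_one_div_cancel hp0.ne'
  have hKform : K = 2 * p * (d / c) ^ 2 + 1 - p / 2 := by
    rw [hK, hE]; nlinarith [hpinv]
  have hK0 : 0 < K := by nlinarith
  have hγdef : gam p c d = c ^ 2 / (2 * d) * K ^ (1 / p) := rfl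
  set γ := gam p c d with hγ
  clear_value γ K E u
  have hγ0 : 0 < γ := by
    rw [hγdef]; exact mul_pos (by positivity) (Real.rpow_pos_of_pos hK0 _)
  -- c ≤ γ
  have hKge : (2 * (d / c)) ^ p ≤ K := by
    rw [Real.mul_rpow (by norm_num) (by positivity)]
    have h2p : (2:ℝ) ^ p ≤ 2 * p := two_rpow_le_two_mul hp1.le hp2.le
    have htp : (d / c) ^ p ≤ (d / c) ^ 2 := by
      have h := Real.rpow_le_rpow_of_exponent_le ht hp2.le
      calc (d / c) ^ p ≤ (d / c) ^ (2:ℝ) := h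
        _ = (d / c) ^ (2:ℕ) := by
            rw [← Real.rpow_natCast (d / c) 2]; norm_num
    have hprod : (2:ℝ) ^ p * (d / c) ^ p ≤ (2 * p) * (d / c) ^ 2 :=
      mul_le_mul h2p htp (Real.rpow_nonneg (by positivity) p) (by positivity)
    nlinarith [hprod]
  have hcγ : c ≤ γ := by
    have h1 : 2 * (d / c) ≤ K ^ (1 / p) := by
      have h := Real.rpow_le_rpow (by positivity) hKge (by positivity : (0:ℝ) ≤ 1 / p)
      rwa [← Real.rpow_mul (by positivity), hpinv, Real.rpow_one] at h
    have h2 : c ^ 2 / (2 * d) * (2 * (d / c)) = c := by field_simp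
    calc c = c ^ 2 / (2 * d) * (2 * (d / c)) := h2.symm
      _ ≤ c ^ 2 / (2 * d) * K ^ (1 / p) :=
          mul_le_mul_of_nonneg_left h1 (by positivity)
      _ = γ := hγdef.symm
  have habs : |γ * l| = γ * u := by rw [hu, abs_mul, abs_of_pos hγ0]
  simp only [phi, habs]
  by_cases hcase : γ * u ≤ 1
  · rw [if_pos hcase]
    refine le_trans (min_le_left _ _) ?_
    have hcc : c ^ 2 ≤ γ ^ 2 := by nlinarith
    have hgl : (γ * l) ^ 2 = γ ^ 2 * u ^ 2 := by rw [mul_pow, hl2]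
    rw [hgl, hl2]
    have h := mul_le_mul_of_nonneg_right hcc (sq_nonneg u)
    linarith
  · rw [if_neg hcase]
    push_neg at hcase
    have hupos : 0 < u := by nlinarith
    set u₀ : ℝ := 2 * d / c ^ 2 with hu₀
    clear_value u₀
    have hu₀0 : 0 < u₀ := by rw [hu₀]; positivity
    have hγu₀ : γ * u₀ = K ^ (1 / p) := by
      rw [hγdef, hu₀]; field_simp
    have hγu₀p : (γ * u₀) ^ p = K := by
      rw [hγu₀, ← Real.rpow_mul hK0.le, one_div_mul_cancel hp0.ne', Real.rpow_one]
    by_cases hB : u₀ ≤ u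
    · refine le_trans (min_le_right _ _) ?_
      set w := u / u₀ with hw
      clear_value w
      have hw1 : 1 ≤ w := by rw [hw]; exact (one_le_div hu₀0).mpr hB
      have hus : u = u₀ * w := by rw [hw]; field_simp
      have hwp : w ≤ w ^ p := by
        calc w = w ^ (1:ℝ) := (Real.rpow_one w).symm
          _ ≤ w ^ p := Real.rpow_le_rpow_of_exponent_le hw1 hp1.le
      have h1 : K * w ≤ (γ * u) ^ p := by
        have hKW : (γ * u) ^ p = K * w ^ p := by
          rw [hus, ← mul_assoc,
            Real.mul_rpow (mul_pos hγ0 hu₀0).le (by linarith : (0:ℝ) ≤ w), hγu₀p]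
        rw [hKW]
        exact mul_le_mul_of_nonneg_left hwp hK0.le
      have hdu : d * u = 2 * (d / c) ^ 2 * w := by
        rw [hus, hu₀]; field_simp
      have h3 : K * w / p = E * w := by rw [hK]; field_simp
      have h2 : K * w / p ≤ (γ * u) ^ p / p := by gcongr
      rw [hdu]
      have h4 : 2 * (d / c) ^ 2 * w ≤ E * w - 1 / p + 1 / 2 := by
        rw [hE]; nlinarith [hq, hw1]
      linarith [h2, h3 ▸ h4]
    · push_neg at hB
      refine le_trans (min_le_left _ _) ?_
      set v₁ : ℝ := 1 / γ ^ 2 with hv₁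
      set v₂ : ℝ := u₀ ^ 2 with hv₂
      clear_value v₁ v₂
      have hγp0 : (0:ℝ) < γ ^ p := Real.rpow_pos_of_pos hγ0 p
      have hX₁ : γ ^ p * v₁ ^ (p / 2) = 1 := by
        rw [hv₁, show (1:ℝ) / γ ^ 2 = (1 / γ) ^ 2 by rw [div_pow, one_pow],
          sq_rpow_half _ (by positivity), one_div, Real.inv_rpow hγ0.le,
          mul_inv_cancel₀ hγp0.ne']
      have hX₂ : γ ^ p * v₂ ^ (p / 2) = K := by
        rw [hv₂, sq_rpow_half _ hu₀0.le, ← Real.mul_rpow hγ0.le hu₀0.le, hγu₀p]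
      have hv₁v : v₁ < u ^ 2 := by
        rw [hv₁]
        rw [div_lt_iff₀ (by positivity)]
        nlinarith [hcase, hγ0, hupos]
      have hvv₂ : u ^ 2 < v₂ := by rw [hv₂]; nlinarith
      have hD : 0 < v₂ - v₁ := by nlinarith
      set a : ℝ := (v₂ - u ^ 2) / (v₂ - v₁) with ha_def
      set b : ℝ := (u ^ 2 - v₁) / (v₂ - v₁) with hb_def
      clear_value a b
      have ha : 0 ≤ a := by
        rw [ha_def]; exact div_nonneg (by linarith) hD.le
      have hb : 0 ≤ b := by
        rw [hb_def]; exact div_nonneg (by linarith) hD.le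
      have hab : a + b = 1 := by
        rw [ha_def, hb_def, ← add_div,
          show v₂ - u ^ 2 + (u ^ 2 - v₁) = v₂ - v₁ from by ring, div_self hD.ne']
      have hcombo : a * v₁ + b * v₂ = u ^ 2 := by
        rw [ha_def, hb_def, div_mul_eq_mul_div, div_mul_eq_mul_div, ← add_div,
          div_eq_iff hD.ne']
        ring
      have hconc := (Real.concaveOn_rpow (by positivity : (0:ℝ) ≤ p / 2)
        (by linarith : p / 2 ≤ 1)).2
        (show v₁ ∈ Set.Ici (0:ℝ) by rw [Set.mem_Ici, hv₁]; positivity)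
        (show v₂ ∈ Set.Ici (0:ℝ) by rw [Set.mem_Ici, hv₂]; positivity) ha hb hab
      simp only [smul_eq_mul] at hconc
      rw [hcombo] at hconc
      -- endpoint inequalities
      have hv₁p : γ ^ p * v₁ ^ (p / 2) / p = 1 / p := by rw [hX₁]
      have e1 : c ^ 2 * v₁ / 2 ≤ γ ^ p * v₁ ^ (p / 2) / p - 1 / p + 1 / 2 := by
        rw [hv₁p]
        have h : c ^ 2 * v₁ ≤ 1 := by
          rw [hv₁, mul_one_div, div_le_one (by positivity)]
          exact pow_le_pow_left₀ hc.le hcγ 2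
        linarith
      have hv₂p : γ ^ p * v₂ ^ (p / 2) / p = E := by
        rw [hX₂, hK]; field_simp
      have hc2v₂ : c ^ 2 * v₂ / 2 = 2 * (d / c) ^ 2 := by
        rw [hv₂, hu₀]; field_simp
      have e2 : c ^ 2 * v₂ / 2 ≤ γ ^ p * v₂ ^ (p / 2) / p - 1 / p + 1 / 2 := by
        rw [hv₂p, hc2v₂, hE]; ring_nf; linarith
      -- combine
      have hmain : (γ * u) ^ p = γ ^ p * (u ^ 2) ^ (p / 2) := by
        rw [Real.mul_rpow hγ0.le hu0, sq_rpow_half u hu0]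
      rw [hl2, hmain]
      have hC : (0:ℝ) ≤ γ ^ p / p := by positivity
      have H1 := mul_le_mul_of_nonneg_left hconc hC
      have H2 := mul_le_mul_of_nonneg_left e1 ha
      have H3 := mul_le_mul_of_nonneg_left e2 hb
      have heq1 : a * (c ^ 2 * v₁ / 2) + b * (c ^ 2 * v₂ / 2) = c ^ 2 * u ^ 2 / 2 := by
        linear_combination (c ^ 2 / 2) * hcombo
      have heq2 : a * (γ ^ p * v₁ ^ (p / 2) / p - 1 / p + 1 / 2)
            + b * (γ ^ p * v₂ ^ (p / 2) / p - 1 / p + 1 / 2)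
          = γ ^ p / p * (a * v₁ ^ (p / 2) + b * v₂ ^ (p / 2)) - 1 / p + 1 / 2 := by
        linear_combination (1 / 2 - 1 / p) * hab
      calc c ^ 2 * u ^ 2 / 2
          = a * (c ^ 2 * v₁ / 2) + b * (c ^ 2 * v₂ / 2) := heq1.symm
        _ ≤ a * (γ ^ p * v₁ ^ (p / 2) / p - 1 / p + 1 / 2)
            + b * (γ ^ p * v₂ ^ (p / 2) / p - 1 / p + 1 / 2) := add_le_add H2 H3
        _ = γ ^ p / p * (a * v₁ ^ (p / 2) + b * v₂ ^ (p / 2)) - 1 / p + 1 / 2 := heq2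
        _ ≤ γ ^ p / p * (u ^ 2) ^ (p / 2) - 1 / p + 1 / 2 := by
            have := H1
            linarith
        _ = γ ^ p * (u ^ 2) ^ (p / 2) / p - 1 / p + 1 / 2 := by ring
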